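/- arXiv:1302.5216 — 7 statements merged into one kernel-verified Lean document; each statement's English description precedes it below -/
import Mathlib

section
/- With the maps ∂ᵢ on A = O_Q(Kⁿ) defined by ∂ᵢ(x^α) = αᵢ δᵢ(α) x^{α−εⁱ}, δᵢ(α) = ∏_{j>i} qᵢⱼ^{αⱼ}, one has the q-commutation relations ∂ᵢ∂ⱼ = qⱼᵢ ∂ⱼ∂ᵢ for all i < j (as K-linear endomorphisms of A). -/
/-- The ordered monomial `x^α = x₁^{α₁} ⋯ xₙ^{αₙ}`. -/
def xpow {A : Type} [Monoid A] {n : ℕ} (X : Fin n → A) (α : Fin n → ℕ) : A :=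
  (List.ofFn fun i => X i ^ α i).prod

/-- `δᵢ(α) = ∏_{j > i} qᵢⱼ^{αⱼ}`. -/
def deltaQ {K : Type} [Field K] {n : ℕ} (q : Fin n → Fin n → K)
    (i : Fin n) (α : Fin n → ℕ) : K :=
  ∏ j ∈ Finset.univ.filter (i < ·), q i j ^ α j

/-- On `A = O_Q(Kⁿ)` (monomials `x^α` spanning `A`), the maps
`∂ᵢ(x^α) = αᵢ δᵢ(α) x^{α-εⁱ}` satisfy `∂ᵢ∂ⱼ = qⱼᵢ ∂ⱼ∂ᵢ` for `i < j`, as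
`K`-linear endomorphisms of `A`. -/
theorem quantumPolynomial_partial_qcomm {K A : Type} [Field K] [Ring A] [Algebra K A]
    {n : ℕ} (q : Fin n → Fin n → K)
    (hQanti : ∀ i j, q i j * q j i = 1) (hQdiag : ∀ i, q i i = 1)
    (hQne : ∀ i j, q i j ≠ 0)
    (X : Fin n → A)
    (hrel : ∀ i j, i < j → X i * X j = q i j • (X j * X i))
    (hspan : Submodule.span K (Set.range (xpow X)) = ⊤)
    (par : Fin n → (A →ₗ[K] A))
    (hpar : ∀ i α, par i (xpow X α) =
      ((α i : K) * deltaQ q i α) • xpow X (α - Pi.single i 1)) :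
    ∀ i j : Fin n, i < j →
      (par i).comp (par j) = q j i • ((par j).comp (par i)) := by
  intro i j hij
  have hne : i ≠ j := ne_of_lt hij
  apply LinearMap.ext_on hspan
  rintro _ ⟨α, rfl⟩
  simp only [LinearMap.comp_apply, LinearMap.smul_apply, hpar, map_smul, smul_smul]
  have hγ : (α - Pi.single j 1) - Pi.single i 1 = (α - Pi.single i 1) - Pi.single j 1 := by
    funext k
    simp only [Pi.sub_apply]
    omega
  rw [hγ]
  congr 1
  -- index simplifications
  have h1 : ((α - Pi.single j 1 : Fin n → ℕ)) i = α i := by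
    simp [Pi.sub_apply, Pi.single_eq_of_ne hne]
  have h2 : ((α - Pi.single i 1 : Fin n → ℕ)) j = α j := by
    simp [Pi.sub_apply, Pi.single_eq_of_ne hne.symm]
  have h3 : deltaQ q j (α - Pi.single i 1) = deltaQ q j α := by
    unfold deltaQ
    refine Finset.prod_congr rfl fun k hk => ?_
    simp only [Finset.mem_filter] at hk
    have : k ≠ i := by
      intro h; subst h; exact absurd (hij.trans hk.2) (lt_irrefl _)
    simp [Pi.sub_apply, Pi.single_eq_of_ne this]
  rw [h1, h2, h3]
  -- key: (α j) * δᵢ(α - εʲ) * q i j = (α j) * δᵢ(α)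
  have hjmem : j ∈ Finset.univ.filter (i < ·) := by simp [hij]
  have key : (α j : K) * deltaQ q i (α - Pi.single j 1) * q i j
      = (α j : K) * deltaQ q i α := by
    unfold deltaQ
    rw [← Finset.mul_prod_erase _ _ hjmem, ← Finset.mul_prod_erase _ (fun k => q i k ^ α k) hjmem]
    have hrest : ∀ k ∈ (Finset.univ.filter (i < ·)).erase j,
        q i k ^ ((α - Pi.single j 1 : Fin n → ℕ)) k = q i k ^ α k := by
      intro k hk
      have : k ≠ j := (Finset.mem_erase.mp hk).1
      simp [Pi.sub_apply, Pi.single_eq_of_ne this]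
    rw [Finset.prod_congr rfl hrest]
    have hjval : ((α - Pi.single j 1 : Fin n → ℕ)) j = α j - 1 := by
      simp [Pi.sub_apply]
    rw [hjval]
    rcases Nat.eq_zero_or_pos (α j) with h | h
    · simp [h]
    · have : q i j ^ (α j - 1) * q i j = q i j ^ α j := by
        rw [← pow_succ]
        congr 1
        omega
      linear_combination ((α j : K) * ∏ x ∈ (Finset.univ.filter (i < ·)).erase j, q i x ^ α x) * this
  have hq : q j i = (q i j)⁻¹ := eq_inv_of_mul_eq_one_left (hQanti j i)
  rw [hq, eq_comm, inv_mul_eq_iff_eq_mul₀ (hQne i j)]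
  linear_combination (-(deltaQ q j α) * (α i : K)) * key
end

section
/- In the quantum exterior algebra Λ^Q(Ω¹) over A built from an upper triangular right twisted multi-derivation (∂,σ) (σᵢⱼ = 0 for i > j), the top form ω̄ = ω₁ ∧ ⋯ ∧ ωₙ satisfies ω̄·a = det_σ(a)·ω̄ for all a ∈ A, where det_σ = σ₁₁ ∘ σ₂₂ ∘ ⋯ ∘ σₙₙ. -/
/-- In the quantum exterior algebra `Λ^Q(Ω¹)` over `A` built from an
upper triangular right twisted multi-derivation (`σᵢⱼ = 0` for `i > j`), the top
form `ω̄ = ω₁ ∧ ⋯ ∧ ωₙ` satisfies `ω̄ · a = det_σ(a) · ω̄` for all `a ∈ A`, where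
`det_σ = σ₁₁ ∘ σ₂₂ ∘ ⋯ ∘ σₙₙ`. -/
theorem quantumExterior_topForm_detSigma {K A L : Type}
    [Field K] [Ring A] [Algebra K A] [Ring L] [Algebra K L]
    {n : ℕ} (q : Fin n → Fin n → K)
    (hQanti : ∀ i j, q i j * q j i = 1) (hQdiag : ∀ i, q i i = 1)
    (ι : A →ₐ[K] L) (w : Fin n → L)
    (σ : A →ₐ[K] Matrix (Fin n) (Fin n) A)
    -- upper triangular:
    (htri : ∀ (a : A) (i j : Fin n), j < i → σ a i j = 0)
    -- the bimodule relation `ωᵢ a = Σⱼ σᵢⱼ(a) ωⱼ`: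
    (hcomm : ∀ (a : A) (i : Fin n), w i * ι a = ∑ j, ι (σ a i j) * w j)
    -- the quantum exterior relations:
    (hanti : ∀ i j : Fin n, w i * w j + q i j • (w j * w i) = 0)
    (hsq : ∀ i : Fin n, w i * w i = 0) :
    ∀ a : A,
      (List.ofFn w).prod * ι a =
        ι (((List.ofFn fun i => fun x : A => σ x i i).foldr (· ∘ ·) id) a) *
          (List.ofFn w).prod := by
  intro a
  -- w j times a product containing w j is zero
  have mz : ∀ (l : List (Fin n)) (j : Fin n), j ∈ l → w j * (l.map w).prod = 0 := by
    intro l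
    induction l with
    | nil => simp
    | cons k t ih =>
      intro j hj
      rw [List.map_cons, List.prod_cons, ← mul_assoc]
      rcases List.mem_cons.mp hj with h | h
      · subst h
        rw [hsq j, zero_mul]
      · have hwk : w j * w k = (-(q j k)) • (w k * w j) := by
          rw [neg_smul]
          exact eq_neg_of_add_eq_zero_left (hanti j k)
        rw [hwk, smul_mul_assoc, mul_assoc, ih j h, mul_zero, smul_zero]
  -- membership of large indices in drops of finRange
  have memdrop : ∀ (m : ℕ) (j : Fin n), m ≤ j.val → j ∈ (List.finRange n).drop m := by
    intro m j hm
    rw [List.mem_iff_getElem]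
    have hlen : ((List.finRange n).drop m).length = n - m := by simp
    refine ⟨j.val - m, by omega, ?_⟩
    rw [List.getElem_drop, List.getElem_finRange]
    ext
    simp
    omega
  set wl : ℕ → L := fun d => (((List.finRange n).drop d).map w).prod with hwl
  set fl : ℕ → A → A :=
    fun d => (((List.finRange n).drop d).map (fun i => fun x : A => σ x i i)).foldr (· ∘ ·) id
    with hfl
  have key : ∀ k d, d + k = n → wl d * ι a = ι (fl d a) * wl d := by
    intro k
    induction k with
    | zero =>
      intro d hd
      subst hd
      simp [hwl, hfl, List.drop_eq_nil_of_le]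
    | succ k ih =>
      intro d hd
      have hdlt : d < (List.finRange n).length := by simp; omega
      have hdn : d < n := by omega
      have hdrop := List.drop_eq_getElem_cons hdlt
      rw [List.getElem_finRange] at hdrop
      set i : Fin n := Fin.cast (List.length_finRange (n := n)) ⟨d, hdlt⟩ with hi
      have hwd : wl d = w i * wl (d + 1) := by
        simp only [hwl, hdrop, List.map_cons, List.prod_cons]
      have hfd : ∀ x, fl d x = σ (fl (d + 1) x) i i := by
        intro x
        simp only [hfl, hdrop, List.map_cons, List.foldr_cons, Function.comp_apply]
      rw [hwd, hfd, mul_assoc, ih (d + 1) (by omega), ← mul_assoc, hcomm]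
      rw [Finset.sum_mul]
      rw [Finset.sum_eq_single i]
      · rw [mul_assoc]
      · intro j _ hj
        rcases lt_or_gt_of_ne hj with hlt | hgt
        · rw [htri _ _ _ hlt, map_zero, zero_mul, zero_mul]
        · have : w j * wl (d + 1) = 0 := by
            rw [hwl]
            exact mz _ j (memdrop (d + 1) j (by
              have : i < j := hgt
              have : (i : ℕ) < (j : ℕ) := this
              simp [hi] at this
              omega))
          rw [mul_assoc, this, mul_zero]
      · intro h
        exact absurd (Finset.mem_univ i) h
  have := key n 0 (by omega)
  simpa [hwl, hfl, List.ofFn_eq_map] using this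
end

section
/- Let (∂,σ) be a free upper triangular right twisted multi-derivation on A whose associated FODC extends to the n-dimensional differential calculus Ω = Λ^Q(Ω¹). For 0 ≤ m ≤ n, the maps Θₘ: Ωᵐ → Hom_A(Ω^{n−m}, A), Θₘ(v) = (−1)^{m(n−1)} β v (where β is the right dual basis of the top form ω̄ and (βv)(w) = β(v∧w)), are isomorphisms of right A-modules. -/
/-- The ordered wedge monomial `ω_{i₁} ∧ ⋯ ∧ ω_{i_k}` for `s = {i₁ < ⋯ < i_k}`. -/
def wedgeProd {L : Type} [Monoid L] {n : ℕ} (w : Fin n → L) (s : Finset (Fin n)) : L :=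
  ((s.sort (· ≤ ·)).map w).prod

/-- The degree-`m` component `Ωᵐ` of `Λ^Q(Ω¹)`, as a `K`-subspace of `L` (it is
spanned by the elements `a · ω_{i₁} ∧ ⋯ ∧ ω_{i_m} · b`, equivalently by the
`ω_{i₁} ∧ ⋯ ∧ ω_{i_m} · a` since `Ω` is free as a right `A`-module). -/
def omegaDeg {K A L : Type} [Field K] [Ring A] [Algebra K A] [Ring L] [Algebra K L]
    {n : ℕ} (ι : A →ₐ[K] L) (w : Fin n → L) (m : ℕ) : Submodule K L :=
  Submodule.span K
    {x : L | ∃ (s : Finset (Fin n)) (a : A), s.card = m ∧ x = wedgeProd w s * ι a}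

section Aux

variable {K A L : Type} [Field K] [Ring A] [Algebra K A] [Ring L] [Algebra K L]
  {n : ℕ}

abbrev lprod (w : Fin n → L) (l : List (Fin n)) : L := (l.map w).prod

lemma lprod_cons (w : Fin n → L) (i : Fin n) (l : List (Fin n)) :
    lprod w (i :: l) = w i * lprod w l := by simp [lprod]

lemma wedgeProd_eq_lprod (w : Fin n → L) (s : Finset (Fin n)) :
    wedgeProd w s = lprod w (s.sort (· ≤ ·)) := rfl

lemma wmul_lprod_eq_zero (w : Fin n → L) (q : Fin n → Fin n → K)
    (hanti : ∀ i j : Fin n, w i * w j + q i j • (w j * w i) = 0)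
    (hsq : ∀ i : Fin n, w i * w i = 0)
    (j : Fin n) (l : List (Fin n)) (hj : j ∈ l) :
    w j * lprod w l = 0 := by
  induction l with
  | nil => simp at hj
  | cons k l ih =>
    rw [lprod_cons, ← mul_assoc]
    rcases List.mem_cons.mp hj with h | h
    · subst h; rw [hsq j, zero_mul]
    · have hjk : w j * w k = (-(q j k)) • (w k * w j) := by
        have := hanti j k
        rw [neg_smul]
        linear_combination (norm := module) this
      rw [hjk, smul_mul_assoc, mul_assoc, ih h, mul_zero, smul_zero]

lemma lprod_eq_zero_of_dup (w : Fin n → L) (q : Fin n → Fin n → K)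
    (hanti : ∀ i j : Fin n, w i * w j + q i j • (w j * w i) = 0)
    (hsq : ∀ i : Fin n, w i * w i = 0)
    (l : List (Fin n)) (hl : ¬ l.Nodup) : lprod w l = 0 := by
  induction l with
  | nil => simp at hl
  | cons k l ih =>
    rw [lprod_cons]
    by_cases hk : k ∈ l
    · exact wmul_lprod_eq_zero w q hanti hsq k l hk
    · have : ¬ l.Nodup := by
        intro h; exact hl (List.nodup_cons.mpr ⟨hk, h⟩)
      rw [ih this, mul_zero]

lemma lprod_perm (w : Fin n → L) (q : Fin n → Fin n → K)
    (hQanti : ∀ i j, q i j * q j i = 1)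
    (hanti : ∀ i j : Fin n, w i * w j + q i j • (w j * w i) = 0)
    {l₁ l₂ : List (Fin n)} (h : l₁.Perm l₂) :
    ∃ c : K, c ≠ 0 ∧ lprod w l₁ = c • lprod w l₂ := by
  induction h with
  | nil => exact ⟨1, one_ne_zero, (one_smul K _).symm⟩
  | cons x h ih =>
    obtain ⟨c, hc, hcl⟩ := ih
    exact ⟨c, hc, by rw [lprod_cons, hcl, mul_smul_comm, lprod_cons]⟩
  | swap x y l =>
    refine ⟨-(q y x), ?_, ?_⟩
    · intro h0
      have := hQanti y x
      rw [neg_eq_zero.mp h0, zero_mul] at this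
      exact zero_ne_one this
    · rw [lprod_cons, lprod_cons, lprod_cons, lprod_cons, ← mul_assoc, ← mul_assoc]
      have : w y * w x = (-(q y x)) • (w x * w y) := by
        have := hanti y x
        rw [neg_smul]
        linear_combination (norm := module) this
      rw [this, smul_mul_assoc]
  | trans h₁ h₂ ih₁ ih₂ =>
    obtain ⟨c₁, hc₁, e₁⟩ := ih₁
    obtain ⟨c₂, hc₂, e₂⟩ := ih₂
    exact ⟨c₁ * c₂, mul_ne_zero hc₁ hc₂, by rw [e₁, e₂, smul_smul]⟩

/-- non-disjoint wedges multiply to zero -/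
lemma wedge_mul_wedge_of_not_disjoint (w : Fin n → L) (q : Fin n → Fin n → K)
    (hanti : ∀ i j : Fin n, w i * w j + q i j • (w j * w i) = 0)
    (hsq : ∀ i : Fin n, w i * w i = 0)
    {s t : Finset (Fin n)} (h : ¬ Disjoint s t) :
    wedgeProd w s * wedgeProd w t = 0 := by
  have : wedgeProd w s * wedgeProd w t = lprod w (s.sort (· ≤ ·) ++ t.sort (· ≤ ·)) := by
    simp [wedgeProd, lprod]
  rw [this]
  apply lprod_eq_zero_of_dup w q hanti hsq
  obtain ⟨j, hjs, hjt⟩ := Finset.not_disjoint_iff.mp h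
  intro hnd
  exact (List.disjoint_of_nodup_append hnd) ((Finset.mem_sort _).mpr hjs)
    ((Finset.mem_sort _).mpr hjt)

/-- disjoint wedges multiply to a nonzero multiple of the union wedge -/
lemma wedge_mul_wedge_of_disjoint (w : Fin n → L) (q : Fin n → Fin n → K)
    (hQanti : ∀ i j, q i j * q j i = 1)
    (hanti : ∀ i j : Fin n, w i * w j + q i j • (w j * w i) = 0)
    {s t : Finset (Fin n)} (h : Disjoint s t) :
    ∃ c : K, c ≠ 0 ∧ wedgeProd w s * wedgeProd w t = c • wedgeProd w (s ∪ t) := by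
  have hperm : (s.sort (· ≤ ·) ++ t.sort (· ≤ ·)).Perm ((s ∪ t).sort (· ≤ ·)) := by
    have h1 : ((s.sort (· ≤ ·) ++ t.sort (· ≤ ·) : List _) : Multiset (Fin n)) = s.val + t.val := by
      rw [← Multiset.coe_add, Finset.sort_eq, Finset.sort_eq]
    have h2 : (((s ∪ t).sort (· ≤ ·) : List _) : Multiset (Fin n)) = s.val + t.val := by
      rw [Finset.sort_eq, ← Finset.disjUnion_eq_union s t h]
      rfl
    rw [← Multiset.coe_eq_coe, h1, h2]
  obtain ⟨c, hc, he⟩ := lprod_perm w q hQanti hanti hperm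
  refine ⟨c, hc, ?_⟩
  have : wedgeProd w s * wedgeProd w t = lprod w (s.sort (· ≤ ·) ++ t.sort (· ≤ ·)) := by
    simp [wedgeProd, lprod]
  rw [this, he, wedgeProd_eq_lprod]

def applyListσ (σ : A →ₐ[K] Matrix (Fin n) (Fin n) A) : List (Fin n) → A → A
  | [], a => a
  | i :: l, a => σ (applyListσ σ l a) i i

lemma applyListσ_bijective (σ : A →ₐ[K] Matrix (Fin n) (Fin n) A)
    (hdiag : ∀ i : Fin n, Function.Bijective (fun a : A => σ a i i))
    (l : List (Fin n)) : Function.Bijective (applyListσ σ l) := by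
  induction l with
  | nil => exact Function.bijective_id
  | cons i l ih => exact (hdiag i).comp ih

lemma lprod_comm (w : Fin n → L) (q : Fin n → Fin n → K) (ι : A →ₐ[K] L)
    (σ : A →ₐ[K] Matrix (Fin n) (Fin n) A)
    (htri : ∀ (a : A) (i j : Fin n), j < i → σ a i j = 0)
    (hcomm : ∀ (a : A) (i : Fin n), w i * ι a = ∑ j, ι (σ a i j) * w j)
    (hanti : ∀ i j : Fin n, w i * w j + q i j • (w j * w i) = 0)
    (hsq : ∀ i : Fin n, w i * w i = 0)
    (l : List (Fin n)) (hsort : List.Pairwise (· < ·) l)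
    (hclosed : ∀ x ∈ l, ∀ j : Fin n, x < j → j ∈ l) (a : A) :
    lprod w l * ι a = ι (applyListσ σ l a) * lprod w l := by
  induction l with
  | nil => simp [lprod, applyListσ]
  | cons i l ih =>
    have hsort' : List.Pairwise (· < ·) l := hsort.of_cons
    have hlt : ∀ x ∈ l, i < x := fun x hx => (List.pairwise_cons.mp hsort).1 x hx
    have hclosed' : ∀ x ∈ l, ∀ j : Fin n, x < j → j ∈ l := by
      intro x hx j hj
      have hjl : j ∈ i :: l := hclosed x (List.mem_cons_of_mem i hx) j hj
      rcases List.mem_cons.mp hjl with h | h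
      · exact absurd (h ▸ hj) (not_lt.mpr (le_of_lt (hlt x hx)))
      · exact h
    rw [lprod_cons, mul_assoc, ih hsort' hclosed', ← mul_assoc, hcomm, Finset.sum_mul]
    rw [Finset.sum_eq_single i]
    · simp [applyListσ, lprod_cons, mul_assoc]
    · intro j _ hji
      rcases lt_or_gt_of_ne hji with h | h
      · rw [htri _ i j h, map_zero, zero_mul, zero_mul]
      · have hjl : j ∈ l := by
          rcases List.mem_cons.mp (hclosed i (List.mem_cons_self (a := i) (l := l)) j h) with h' | h'
          · exact absurd h' (ne_of_gt h)
          · exact h'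
        rw [mul_assoc, wmul_lprod_eq_zero w q hanti hsq j l hjl, mul_zero]
    · intro h; exact absurd (Finset.mem_univ i) h

/-- Commutation of the top form with scalars. -/
lemma wedge_univ_comm (w : Fin n → L) (q : Fin n → Fin n → K) (ι : A →ₐ[K] L)
    (σ : A →ₐ[K] Matrix (Fin n) (Fin n) A)
    (htri : ∀ (a : A) (i j : Fin n), j < i → σ a i j = 0)
    (hcomm : ∀ (a : A) (i : Fin n), w i * ι a = ∑ j, ι (σ a i j) * w j)
    (hanti : ∀ i j : Fin n, w i * w j + q i j • (w j * w i) = 0)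
    (hsq : ∀ i : Fin n, w i * w i = 0) (a : A) :
    wedgeProd w Finset.univ * ι a
      = ι (applyListσ σ ((Finset.univ : Finset (Fin n)).sort (· ≤ ·)) a)
        * wedgeProd w Finset.univ := by
  rw [wedgeProd_eq_lprod]
  exact lprod_comm w q ι σ htri hcomm hanti hsq _ (Finset.sortedLT_sort _).pairwise
    (fun x _ j _ => (Finset.mem_sort _).mpr (Finset.mem_univ j)) a

end Aux


/-- For a free upper triangular right twisted multi-derivation
`(∂,σ)` whose FODC extends to `Ω = Λ^Q(Ω¹)`, the maps
`Θₘ : Ωᵐ → Hom_A(Ω^{n-m}, A)`, `Θₘ(v) = (-1)^{m(n-1)} β v` (with `β` the right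
dual basis of the top form `ω̄`, and `(βv)(x) = β(v ∧ x)`) are isomorphisms of
right `A`-modules.  Bijectivity is expressed by: every right `A`-linear
functional `f` on `Ω^{n-m}` comes from a unique `v ∈ Ωᵐ` (here `Ωᵐ` is spanned
by the `a · ω_{i₁}∧⋯∧ω_{i_m}`). -/
theorem quantumExterior_Theta_iso {K A L : Type}
    [Field K] [Ring A] [Algebra K A] [Ring L] [Algebra K L]
    {n : ℕ} (q : Fin n → Fin n → K)
    (hQanti : ∀ i j, q i j * q j i = 1) (hQdiag : ∀ i, q i i = 1)
    (ι : A →ₐ[K] L) (w : Fin n → L)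
    (σ : A →ₐ[K] Matrix (Fin n) (Fin n) A)
    -- upper triangular with the diagonal entries automorphisms:
    (htri : ∀ (a : A) (i j : Fin n), j < i → σ a i j = 0)
    (hdiag : ∀ i : Fin n, Function.Bijective (fun a : A => σ a i i))
    -- the bimodule relation `ωᵢ a = Σⱼ σᵢⱼ(a) ωⱼ`:
    (hcomm : ∀ (a : A) (i : Fin n), w i * ι a = ∑ j, ι (σ a i j) * w j)
    -- the quantum exterior relations:
    (hanti : ∀ i j : Fin n, w i * w j + q i j • (w j * w i) = 0)
    (hsq : ∀ i : Fin n, w i * w i = 0)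
    -- `Ω` is a free right `A`-module with basis the ordered wedge monomials:
    (hbasis : ∀ x : L, ∃! c : Finset (Fin n) → A,
        x = ∑ s : Finset (Fin n), wedgeProd w s * ι (c s))
    -- `β`, the right dual basis of `ω̄ = ω₁ ∧ ⋯ ∧ ωₙ`: `β(ω̄ a) = a`:
    (β : L →ₗ[K] A)
    (hβ : ∀ a : A, β (wedgeProd w Finset.univ * ι a) = a)
    (m : ℕ) (hm : m ≤ n) :
    ∀ f : L →ₗ[K] A,
      -- `f` restricts to a right `A`-linear map `Ω^{n-m} → A`:
      (∀ (s : Finset (Fin n)) (a : A), s.card = n - m →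
        f (wedgeProd w s * ι a) = f (wedgeProd w s) * a) →
      -- there is a unique `v ∈ Ωᵐ` with `Θₘ(v) = f` on `Ω^{n-m}`:
      ∃! v : L,
        v ∈ Submodule.span K
            {x : L | ∃ (a : A) (s : Finset (Fin n)), s.card = m ∧ x = ι a * wedgeProd w s} ∧
        ∀ x ∈ omegaDeg ι w (n - m), f x = ((-1 : K) ^ (m * (n - 1))) • β (v * x) := by
  intro f hf
  set ε : K := (-1 : K) ^ (m * (n - 1)) with hεdef
  have hε : ε ≠ 0 := pow_ne_zero _ (neg_ne_zero.mpr one_ne_zero)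
  -- the total twist automorphism τ
  set lu : List (Fin n) := (Finset.univ : Finset (Fin n)).sort (· ≤ ·) with hlu
  have hτbij : Function.Bijective (applyListσ σ lu) := applyListσ_bijective σ hdiag lu
  set e : A ≃ A := Equiv.ofBijective _ hτbij with hedef
  have hωcomm : ∀ a : A, wedgeProd w Finset.univ * ι a = ι (e a) * wedgeProd w Finset.univ :=
    fun a => wedge_univ_comm w q ι σ htri hcomm hanti hsq a
  have hωcomm' : ∀ a : A, ι a * wedgeProd w Finset.univ
      = wedgeProd w Finset.univ * ι (e.symm a) := by
    intro a
    rw [hωcomm (e.symm a), Equiv.apply_symm_apply]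
  -- pairing constants
  have hpair : ∀ s : Finset (Fin n), ∃ c : K, c ≠ 0 ∧
      wedgeProd w s * wedgeProd w sᶜ = c • wedgeProd w Finset.univ := by
    intro s
    obtain ⟨c, hc, he⟩ := wedge_mul_wedge_of_disjoint w q hQanti hanti (disjoint_compl_right : Disjoint s sᶜ)
    exact ⟨c, hc, by rwa [Finset.union_compl] at he⟩
  choose c hc0 hceq using hpair
  -- cardinality facts
  have hcardc : ∀ t : Finset (Fin n), t.card = n - m → tᶜ.card = m := by
    intro t ht
    rw [Finset.card_compl, ht, Fintype.card_fin]
    omega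
  -- key pairing computation
  have hkey : ∀ (b : Finset (Fin n) → A) (t : Finset (Fin n)) (a : A), t.card = n - m →
      β ((∑ s ∈ Finset.univ.filter (fun s : Finset (Fin n) => s.card = m), ι (b s) * wedgeProd w s)
          * (wedgeProd w t * ι a))
        = c tᶜ • (e.symm (b tᶜ) * a) := by
    intro b t a ht
    have hmain : (∑ s ∈ Finset.univ.filter (fun s : Finset (Fin n) => s.card = m),
        ι (b s) * wedgeProd w s) * (wedgeProd w t * ι a)
        = c tᶜ • (wedgeProd w Finset.univ * ι (e.symm (b tᶜ) * a)) := by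
      rw [Finset.sum_mul, Finset.sum_eq_single tᶜ]
      · have h2 := hceq tᶜ
        rw [compl_compl] at h2
        calc ι (b tᶜ) * wedgeProd w tᶜ * (wedgeProd w t * ι a)
            = ι (b tᶜ) * (wedgeProd w tᶜ * wedgeProd w t) * ι a := by
              rw [mul_assoc, mul_assoc, mul_assoc]
          _ = c tᶜ • (ι (b tᶜ) * wedgeProd w Finset.univ * ι a) := by
              rw [h2, mul_smul_comm, smul_mul_assoc]
          _ = c tᶜ • (wedgeProd w Finset.univ * ι (e.symm (b tᶜ) * a)) := by
              rw [hωcomm' (b tᶜ), map_mul, mul_assoc]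
      · intro s hs hne
        have hsm : s.card = m := by simpa using (Finset.mem_filter.mp hs).2
        have hnd : ¬ Disjoint s t := by
          intro hd
          apply hne
          apply Finset.eq_of_subset_of_card_le
          · intro x hx
            exact Finset.mem_compl.mpr (fun hxt => (Finset.disjoint_left.mp hd hx) hxt)
          · rw [hcardc t ht, hsm]
        have h0 : wedgeProd w s * wedgeProd w t = 0 :=
          wedge_mul_wedge_of_not_disjoint w q hanti hsq hnd
        rw [mul_assoc, ← mul_assoc (wedgeProd w s), h0, zero_mul, mul_zero]
      · intro hnm
        exfalso
        exact hnm (Finset.mem_filter.mpr ⟨Finset.mem_univ tᶜ, hcardc t ht⟩)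
    rw [hmain, map_smul, hβ]
  -- the candidate v
  set coef : Finset (Fin n) → A :=
    fun s => e ((ε * c s)⁻¹ • f (wedgeProd w sᶜ)) with hcoefdef
  set v : L := ∑ s ∈ Finset.univ.filter (fun s : Finset (Fin n) => s.card = m),
    ι (coef s) * wedgeProd w s with hvdef
  have hvmem : v ∈ Submodule.span K
      {x : L | ∃ (a : A) (s : Finset (Fin n)), s.card = m ∧ x = ι a * wedgeProd w s} := by
    apply Submodule.sum_mem
    intro s hs
    exact Submodule.subset_span ⟨coef s, s, by simpa using (Finset.mem_filter.mp hs).2, rfl⟩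
  have hvprop : ∀ x ∈ omegaDeg ι w (n - m), f x = ε • β (v * x) := by
    intro x hx
    induction hx using Submodule.span_induction with
    | mem x hx =>
      obtain ⟨t, a, ht, rfl⟩ := hx
      rw [hvdef, hkey coef t a ht, hcoefdef]
      have hsymm : e.symm (e ((ε * c tᶜ)⁻¹ • f (wedgeProd w tᶜᶜ)))
          = (ε * c tᶜ)⁻¹ • f (wedgeProd w t) := by
        rw [Equiv.symm_apply_apply, compl_compl]
      rw [hsymm, hf t a ht, smul_mul_assoc, smul_smul, smul_smul,
        mul_inv_cancel₀ (mul_ne_zero hε (hc0 tᶜ)), one_smul]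
    | zero => simp
    | add x y _ _ ihx ihy => rw [map_add, mul_add, map_add, smul_add, ihx, ihy]
    | smul k x _ ihx => rw [map_smul, mul_smul_comm, map_smul, smul_comm, ihx]
  refine ⟨v, ⟨hvmem, hvprop⟩, ?_⟩
  -- uniqueness
  intro v' ⟨hmem', hprop'⟩
  -- represent v' as a coefficient sum
  have hrepgen : ∀ u ∈ Submodule.span K
      {x : L | ∃ (a : A) (s : Finset (Fin n)), s.card = m ∧ x = ι a * wedgeProd w s},
      ∃ b : Finset (Fin n) → A,
      u = ∑ s ∈ Finset.univ.filter (fun s : Finset (Fin n) => s.card = m),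
        ι (b s) * wedgeProd w s := by
    intro u hu
    induction hu using Submodule.span_induction with
    | mem x hx =>
      obtain ⟨a, s, hs, rfl⟩ := hx
      refine ⟨fun s' => if s' = s then a else 0, ?_⟩
      rw [Finset.sum_eq_single s]
      · simp
      · intro s' _ hne
        simp [hne]
      · intro hns
        exact absurd (Finset.mem_filter.mpr ⟨Finset.mem_univ s, hs⟩) hns
    | zero => exact ⟨0, by simp⟩
    | add x y _ _ ihx ihy =>
      obtain ⟨b1, hb1⟩ := ihx
      obtain ⟨b2, hb2⟩ := ihy
      refine ⟨b1 + b2, ?_⟩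
      rw [hb1, hb2, ← Finset.sum_add_distrib]
      exact Finset.sum_congr rfl (fun s _ => by rw [Pi.add_apply, map_add, add_mul])
    | smul k x _ ihx =>
      obtain ⟨b, hb⟩ := ihx
      refine ⟨fun s => k • b s, ?_⟩
      rw [hb, Finset.smul_sum]
      exact Finset.sum_congr rfl (fun s _ => by rw [map_smul, smul_mul_assoc])
  obtain ⟨b, hb⟩ := hrepgen v' hmem'
  -- coefficients agree
  have hcoefeq : ∀ s ∈ Finset.univ.filter (fun s : Finset (Fin n) => s.card = m),
      b s = coef s := by
    intro s hs
    have hsm : s.card = m := by simpa using (Finset.mem_filter.mp hs).2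
    have htc : sᶜ.card = n - m := by
      rw [Finset.card_compl, hsm, Fintype.card_fin]
    have hxmem : wedgeProd w sᶜ * ι 1 ∈ omegaDeg ι w (n - m) :=
      Submodule.subset_span ⟨sᶜ, 1, htc, rfl⟩
    have h1 := hprop' _ hxmem
    have h2 := hvprop _ hxmem
    have h3 : β (v' * (wedgeProd w sᶜ * ι 1)) = β (v * (wedgeProd w sᶜ * ι 1)) := by
      have := h1.symm.trans h2
      have h4 := congrArg (fun z => ε⁻¹ • z) this
      simpa [inv_smul_smul₀ hε] using h4
    rw [hb, hvdef] at h3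
    rw [hkey b sᶜ 1 htc, hkey coef sᶜ 1 htc, compl_compl] at h3
    have h5 : e.symm (b s) = e.symm (coef s) := by
      have h6 := congrArg (fun z => (c s)⁻¹ • z) h3
      simp only [smul_smul, inv_mul_cancel₀ (hc0 s), one_smul, mul_one] at h6
      exact h6
    exact e.symm.injective h5
  rw [hb, hvdef]
  exact Finset.sum_congr rfl (fun s hs => by rw [hcoefeq s hs])
end

section
/- On Manin's quantum n-space A = K_q[x₁,…,xₙ], define for p ∈ K\{0} the maps σᵢⱼ on monomials by σᵢⱼ = 0 for i > j, σᵢᵢ(x^α) = πᵢ(α) λ̄ᵢ(α) λᵢ(α) p^{αᵢ} x^α, and σᵢⱼ(x^α) = πⱼ(α) λ̄ᵢ(α) λⱼ(α)(p^{αⱼ} − 1) x^{α+εⁱ−εʲ} for i < j, where πᵢ(α) = ∏_{s<i} p^{αₛ}, λᵢ(α) = ∏_{j>i} q^{αⱼ}, λ̄ᵢ(α) = ∏_{j<i} q^{−αⱼ}. Then for every generator xₖ, the relations ωᵢxⱼ = qxⱼωᵢ + (p−1)xᵢωⱼ (i<j), ωᵢxᵢ = pxᵢωᵢ, ωⱼxᵢ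 = pq⁻¹xᵢωⱼ (i<j) imply ωᵢ x^α = Σ_{j≥i} σᵢⱼ(x^α) ωⱼ for all α ∈ ℕⁿ. -/
/-- `πᵢ(α) = ∏_{s < i} p^{αₛ}`. -/
def piManin {K : Type} [Field K] {n : ℕ} (p : K) (i : Fin n) (α : Fin n → ℕ) : K :=
  ∏ s ∈ Finset.univ.filter (· < i), p ^ α s

/-- `λᵢ(α) = ∏_{j > i} q^{αⱼ}`. -/
def lamManin {K : Type} [Field K] {n : ℕ} (q : K) (i : Fin n) (α : Fin n → ℕ) : K :=
  ∏ j ∈ Finset.univ.filter (i < ·), q ^ α j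

/-- `λ̄ᵢ(α) = ∏_{j < i} q^{-αⱼ}`. -/
def lambarManin {K : Type} [Field K] {n : ℕ} (q : K) (i : Fin n) (α : Fin n → ℕ) : K :=
  ∏ j ∈ Finset.univ.filter (· < i), q⁻¹ ^ α j

/-- The value `σᵢⱼ(x^α)`: zero for `i > j`,
`πᵢ(α)λ̄ᵢ(α)λᵢ(α)p^{αᵢ} x^α` for `i = j`, and
`πⱼ(α)λ̄ᵢ(α)λⱼ(α)(p^{αⱼ}-1) x^{α+εⁱ-εʲ}` for `i < j`. -/
def sigmaManin {K A : Type} [Field K] [Ring A] [Algebra K A] {n : ℕ}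
    (p q : K) (X : Fin n → A) (i j : Fin n) (α : Fin n → ℕ) : A :=
  if i = j then
    (piManin p i α * lambarManin q i α * lamManin q i α * p ^ α i) • xpow X α
  else if i < j then
    (piManin p j α * lambarManin q i α * lamManin q j α * (p ^ α j - 1)) •
      xpow X (α + Pi.single i 1 - Pi.single j 1)
  else 0

/- ### Auxiliary structural lemmas about `xpow` -/

lemma xpow_zero' {A : Type} [Monoid A] {n : ℕ} (X : Fin n → A) (α : Fin n → ℕ)
    (h : ∀ s, α s = 0) : xpow X α = 1 := by
  unfold xpow
  apply List.prod_eq_one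
  intro x hx
  obtain ⟨i, hi⟩ := List.mem_ofFn.mp hx
  simp [← hi, h i]

lemma xpow_succ {A : Type} [Monoid A] {n : ℕ} (X : Fin (n+1) → A) (α : Fin (n+1) → ℕ) :
    xpow X α = X 0 ^ α 0 * xpow (fun i : Fin n => X i.succ) (fun i => α i.succ) := by
  unfold xpow
  rw [List.ofFn_succ, List.prod_cons]

lemma xpow_single_mul {A : Type} [Monoid A] : ∀ {n : ℕ} (X : Fin n → A) (β : Fin n → ℕ)
    (m : Fin n), (∀ s, s < m → β s = 0) →
    xpow X (β + Pi.single m 1) = X m * xpow X β := by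
  intro n
  induction n with
  | zero => intro _ _ m; exact m.elim0
  | succ n ih =>
    intro X β m h
    induction m using Fin.cases with
    | zero =>
      rw [xpow_succ, xpow_succ X β]
      have h1 : (β + Pi.single (0 : Fin (n+1)) 1 : Fin (n+1) → ℕ) 0 = β 0 + 1 := by simp
      have h2 : ∀ i : Fin n, (β + Pi.single (0 : Fin (n+1)) 1 : Fin (n+1) → ℕ) i.succ
          = β i.succ := by
        intro i
        simp [Pi.single_apply, (Fin.succ_ne_zero i)]
      simp only [h1, h2, pow_succ']
      rw [mul_assoc]
    | succ m' =>
      have h0 : β 0 = 0 := h 0 (Fin.succ_pos m')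
      rw [xpow_succ, xpow_succ X β]
      have h1 : (β + Pi.single (Fin.succ m') 1 : Fin (n+1) → ℕ) 0 = 0 := by
        simp [Pi.single_apply, (Fin.succ_ne_zero m').symm, h0]
      have h2 : (fun i : Fin n => (β + Pi.single (Fin.succ m') 1 : Fin (n+1) → ℕ) i.succ)
          = (fun i => β i.succ) + Pi.single m' 1 := by
        funext i
        simp [Pi.single_apply, Fin.succ_inj]
      rw [h1, h2, ih (fun i => X i.succ) (fun i => β i.succ) m'
        (fun s hs => h s.succ (Fin.succ_lt_succ_iff.mpr hs))]
      rw [h0]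
      simp [mul_assoc]

/- ### Pointwise lemmas about exponent vectors -/

section Exponents
variable {n : ℕ}

lemma pi_aux1 (i j : Fin n) (hij : i ≠ j) (γ : Fin n → ℕ) :
    γ + Pi.single i 1 - Pi.single j 1 = (γ - Pi.single j 1) + Pi.single i 1 := by
  funext s
  simp only [Pi.add_apply, Pi.sub_apply, Pi.single_apply]
  by_cases h1 : s = i
  · subst h1
    rw [if_pos rfl, if_neg hij]
    omega
  · rw [if_neg h1]
    omega

lemma pi_aux2 (γ : Fin n → ℕ) (j : Fin n) : γ + Pi.single j 1 - Pi.single j 1 = γ := by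
  funext s
  simp only [Pi.add_apply, Pi.sub_apply, Pi.single_apply]
  by_cases h : s = j
  · rw [if_pos h]; omega
  · rw [if_neg h]; omega

lemma pi_aux3 (γ : Fin n → ℕ) (j : Fin n) (h : 1 ≤ γ j) :
    γ - Pi.single j 1 + Pi.single j 1 = γ := by
  funext s
  simp only [Pi.add_apply, Pi.sub_apply, Pi.single_apply]
  by_cases hs : s = j
  · subst hs; rw [if_pos rfl]; omega
  · rw [if_neg hs]; omega

lemma expA (i j m : Fin n) (hij : i ≠ j) (hmj : m ≠ j) (β : Fin n → ℕ) :
    (β - Pi.single j 1) + Pi.single m 1 + Pi.single i 1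
      = (β + Pi.single m 1) + Pi.single i 1 - Pi.single j 1 := by
  rw [pi_aux1 i j hij (β + Pi.single m 1), pi_aux1 m j hmj β]

lemma expB (i m : Fin n) (him : i ≠ m) (β : Fin n → ℕ) (h : 1 ≤ β m) :
    (β - Pi.single m 1) + Pi.single m 1 + Pi.single i 1
      = (β + Pi.single m 1) + Pi.single i 1 - Pi.single m 1 := by
  rw [pi_aux3 β m h, pi_aux1 i m him (β + Pi.single m 1), pi_aux2 β m]

lemma expC (i m : Fin n) (him : i ≠ m) (β : Fin n → ℕ) :
    β + Pi.single i 1 = (β + Pi.single m 1) + Pi.single i 1 - Pi.single m 1 := by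
  rw [pi_aux1 i m him, pi_aux2 β m]

lemma expF (i j m : Fin n) (hij : i ≠ j) (hmj : m ≠ j) (β : Fin n → ℕ) :
    ((β + Pi.single i 1) - Pi.single j 1) + Pi.single m 1
      = (β + Pi.single m 1) + Pi.single i 1 - Pi.single j 1 := by
  rw [pi_aux1 i j hij (β + Pi.single m 1), pi_aux1 m j hmj β, pi_aux1 i j hij β,
    add_right_comm]

end Exponents

/- ### Auxiliary lemmas about the scalar coefficients -/

section Scalars
variable {K : Type} [Field K] {n : ℕ}

lemma prod_aux (r : K) (S : Finset (Fin n)) (β : Fin n → ℕ) (m : Fin n) :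
    ∏ s ∈ S, r ^ (β + Pi.single m 1 : Fin n → ℕ) s
      = (if m ∈ S then r else 1) * ∏ s ∈ S, r ^ β s := by
  have : ∀ s ∈ S, r ^ (β + Pi.single m 1 : Fin n → ℕ) s
      = (if s = m then r else 1) * r ^ β s := by
    intro s _
    simp only [Pi.add_apply, Pi.single_apply, pow_add]
    split_ifs <;> simp [mul_comm]
  rw [Finset.prod_congr rfl this, Finset.prod_mul_distrib,
    Finset.prod_ite_eq' S m (fun _ => r)]

lemma piManin_step (p : K) (j m : Fin n) (β : Fin n → ℕ) :
    piManin p j (β + Pi.single m 1) = (if m < j then p else 1) * piManin p j β := by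
  unfold piManin; rw [prod_aux]; simp

lemma lamManin_step (q : K) (j m : Fin n) (β : Fin n → ℕ) :
    lamManin q j (β + Pi.single m 1) = (if j < m then q else 1) * lamManin q j β := by
  unfold lamManin; rw [prod_aux]; simp

lemma lambarManin_step (q : K) (i m : Fin n) (β : Fin n → ℕ) :
    lambarManin q i (β + Pi.single m 1) = (if m < i then q⁻¹ else 1) * lambarManin q i β := by
  unfold lambarManin; rw [prod_aux]; simp

lemma lambarManin_eq_one (q : K) (i : Fin n) (β : Fin n → ℕ) (h : ∀ s, s < i → β s = 0) :
    lambarManin q i β = 1 := by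
  unfold lambarManin
  apply Finset.prod_eq_one
  intro s hs
  rw [h s (by simpa using hs)]; simp

/-- The scalar coefficient of `σᵢⱼ`. -/
def cman (p q : K) (i j : Fin n) (α : Fin n → ℕ) : K :=
  if i = j then piManin p i α * lambarManin q i α * lamManin q i α * p ^ α i
  else if i < j then piManin p j α * lambarManin q i α * lamManin q j α * (p ^ α j - 1)
  else 0

/-- The exponent of the monomial of `σᵢⱼ`. -/
def eman {n : ℕ} (i j : Fin n) (α : Fin n → ℕ) : Fin n → ℕ :=
  if i = j then α else α + Pi.single i 1 - Pi.single j 1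

lemma eman_diag (i : Fin n) (α : Fin n → ℕ) : eman i i α = α := by
  unfold eman; rw [if_pos rfl]

lemma eman_off {i j : Fin n} (hij : i ≠ j) (α : Fin n → ℕ) :
    eman i j α = α + Pi.single i 1 - Pi.single j 1 := by
  unfold eman; rw [if_neg hij]

lemma apply_step (β : Fin n → ℕ) (m x : Fin n) (h : x ≠ m) :
    (β + Pi.single m 1 : Fin n → ℕ) x = β x := by
  simp [Pi.single_apply, h]

lemma apply_step_self (β : Fin n → ℕ) (m : Fin n) :
    (β + Pi.single m 1 : Fin n → ℕ) m = β m + 1 := by simp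

lemma cman_step_gt (p q : K) (i j m : Fin n) (β : Fin n → ℕ) (him : m < i) :
    cman p q i j (β + Pi.single m 1) = (p * q⁻¹) * cman p q i j β := by
  unfold cman
  rcases eq_or_ne i j with rfl | hij
  · simp only [if_pos rfl, if_true, eq_self_iff_true, piManin_step, lamManin_step,
      lambarManin_step, apply_step β m i him.ne', if_pos him, if_neg (asymm him)]
    ring
  · rw [if_neg hij, if_neg hij]
    rcases lt_or_ge i j with hlt | hle
    · rw [if_pos hlt, if_pos hlt]
      have hjm : j ≠ m := (him.trans hlt).ne'
      simp only [piManin_step, lamManin_step, lambarManin_step,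
        apply_step β m j hjm, if_pos him, if_pos (him.trans hlt),
        if_neg (asymm (him.trans hlt))]
      ring
    · rw [if_neg (not_lt.mpr hle), if_neg (not_lt.mpr hle)]; ring

lemma cman_step_self (p q : K) (j m : Fin n) (β : Fin n → ℕ) :
    cman p q m j (β + Pi.single m 1) = p * cman p q m j β := by
  unfold cman
  rcases eq_or_ne m j with rfl | hij
  · simp only [if_pos rfl, if_true, eq_self_iff_true, piManin_step, lamManin_step,
      lambarManin_step, apply_step_self, lt_irrefl, if_neg (lt_irrefl m), pow_succ]
    simp
    ring
  · rw [if_neg hij, if_neg hij]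
    rcases lt_or_ge m j with hlt | hle
    · rw [if_pos hlt, if_pos hlt]
      simp only [piManin_step, lamManin_step, lambarManin_step,
        apply_step β m j hlt.ne', if_pos hlt, if_neg (asymm hlt), if_neg (lt_irrefl m)]
      ring
    · rw [if_neg (not_lt.mpr hle), if_neg (not_lt.mpr hle)]; ring

lemma cman_step_diag_lt (p q : K) (i m : Fin n) (β : Fin n → ℕ) (him : i < m) :
    cman p q i i (β + Pi.single m 1) = q * cman p q i i β := by
  unfold cman
  simp only [if_pos rfl, if_true, eq_self_iff_true, piManin_step, lamManin_step,
    lambarManin_step, apply_step β m i him.ne, if_pos him, if_neg (asymm him)]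
  ring

lemma cman_step_lt (p q : K) (i j m : Fin n) (β : Fin n → ℕ) (him : i < m) (hmj : m ≤ j)
    (h0 : ∀ s, s < m → β s = 0) :
    cman p q i j (β + Pi.single m 1)
      = cman p q i j β + (p - 1) * cman p q m j β := by
  have hij : i < j := lt_of_lt_of_le him hmj
  have hlbi : lambarManin q i β = 1 :=
    lambarManin_eq_one q i β (fun s hs => h0 s (hs.trans him))
  have hlbm : lambarManin q m β = 1 := lambarManin_eq_one q m β h0
  unfold cman
  rcases eq_or_ne m j with rfl | hmj'
  · rw [if_neg hij.ne, if_pos hij, if_neg hij.ne, if_pos hij, if_pos rfl]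
    simp only [piManin_step, lamManin_step, lambarManin_step, apply_step_self,
      if_neg (lt_irrefl m), if_neg (asymm him), hlbi, hlbm, pow_succ]
    ring
  · have hmj2 : m < j := lt_of_le_of_ne hmj hmj'
    rw [if_neg hij.ne, if_pos hij, if_neg hij.ne, if_pos hij, if_neg hmj', if_pos hmj2]
    simp only [piManin_step, lamManin_step, lambarManin_step,
      apply_step β m j hmj2.ne', if_pos hmj2, if_neg (asymm hmj2), if_neg (asymm him),
      hlbi, hlbm]
    ring

lemma cman_zero_of (p q : K) (i j : Fin n) (β : Fin n → ℕ) (hij : i < j) (hj : β j = 0) :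
    cman p q i j β = 0 := by
  unfold cman
  rw [if_neg hij.ne, if_pos hij, hj]
  simp

lemma cman_zero_of_gt (p q : K) (i j : Fin n) (β : Fin n → ℕ) (hij : j < i) :
    cman p q i j β = 0 := by
  unfold cman
  rw [if_neg hij.ne', if_neg (asymm hij)]

lemma cman_diag_one (p q : K) (i : Fin n) (α : Fin n → ℕ) (h : ∀ s, α s = 0) :
    cman p q i i α = 1 := by
  unfold cman piManin lamManin lambarManin
  rw [if_pos rfl]
  rw [Finset.prod_eq_one (fun s _ => by rw [h s]; simp),
    Finset.prod_eq_one (fun s _ => by rw [h s]; simp),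
    Finset.prod_eq_one (fun s _ => by rw [h s]; simp), h i]
  simp

end Scalars

lemma sigmaManin_eq {K A : Type} [Field K] [Ring A] [Algebra K A] {n : ℕ}
    (p q : K) (X : Fin n → A) (i j : Fin n) (α : Fin n → ℕ) :
    sigmaManin p q X i j α = cman p q i j α • xpow X (eman i j α) := by
  unfold sigmaManin cman eman
  split_ifs <;> simp

lemma mul_term {K L : Type} [Field K] [Ring L] [Algebra K L] (c : K) (Y A w : L) :
    Y * (c • A * w) = c • ((Y * A) * w) := by
  rw [smul_mul_assoc, mul_smul_comm, ← mul_assoc]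

/-- On Manin's quantum `n`-space, the commutation relations
`ωᵢxⱼ = qxⱼωᵢ + (p-1)xᵢωⱼ` (`i<j`), `ωᵢxᵢ = pxᵢωᵢ`, `ωⱼxᵢ = pq⁻¹xᵢωⱼ` (`i<j`)
imply `ωᵢ x^α = Σ_{j ≥ i} σᵢⱼ(x^α) ωⱼ` for all `α ∈ ℕⁿ`, with `σᵢⱼ` as in
`sigmaManin`. -/
theorem maninQuantumSpace_sigma {K L : Type} [Field K] [Ring L] [Algebra K L]
    {n : ℕ} (p q : K) (hp : p ≠ 0) (hq : q ≠ 0)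
    (X W : Fin n → L)
    (hrel : ∀ i j : Fin n, i < j → X i * X j = q • (X j * X i))
    (hw1 : ∀ i j : Fin n, i < j →
      W i * X j = q • (X j * W i) + (p - 1) • (X i * W j))
    (hw2 : ∀ i : Fin n, W i * X i = p • (X i * W i))
    (hw3 : ∀ i j : Fin n, i < j → W j * X i = (p * q⁻¹) • (X i * W j)) :
    ∀ (i : Fin n) (α : Fin n → ℕ),
      W i * xpow X α = ∑ j, sigmaManin p q X i j α * W j := by
  have swap_aux : ∀ (i m : Fin n), i < m → ∀ (δ : Fin n → ℕ), (∀ s, s < m → δ s = 0) →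
      X m * xpow X (δ + Pi.single i 1)
        = q⁻¹ • xpow X (δ + Pi.single m 1 + Pi.single i 1) := by
    intro i m him δ hδ
    rw [xpow_single_mul X δ i (fun s hs => hδ s (hs.trans him)), ← mul_assoc]
    have hxmi : X m * X i = q⁻¹ • (X i * X m) := by
      rw [hrel i m him, smul_smul, inv_mul_cancel₀ hq, one_smul]
    rw [hxmi, smul_mul_assoc, mul_assoc, ← xpow_single_mul X δ m hδ,
      ← xpow_single_mul X (δ + Pi.single m 1) i
        (fun s hs => by
          rw [apply_step δ m s (hs.trans him).ne, hδ s (hs.trans him)])]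
  suffices H : ∀ (N : ℕ) (α : Fin n → ℕ), (∑ s, α s) = N → ∀ i : Fin n,
      W i * xpow X α = ∑ j, cman p q i j α • xpow X (eman i j α) * W j by
    intro i α
    rw [H (∑ s, α s) α rfl i]
    exact (Finset.sum_congr rfl (fun j _ => by rw [sigmaManin_eq])).symm
  intro N
  induction N using Nat.strong_induction_on with
  | _ N IH =>
  intro α hα i
  by_cases hzero : ∀ s, α s = 0
  · -- base case : `α = 0`
    rw [xpow_zero' X α hzero, mul_one]
    rw [Finset.sum_eq_single i]
    · rw [cman_diag_one p q i α hzero, eman_diag, xpow_zero' X α hzero, one_smul, one_mul]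
    · intro j _ hj
      rcases lt_or_gt_of_ne (Ne.symm hj) with hij | hij
      · rw [cman_zero_of p q i j α hij (hzero j), zero_smul, zero_mul]
      · rw [cman_zero_of_gt p q i j α hij, zero_smul, zero_mul]
    · intro h; exact absurd (Finset.mem_univ i) h
  · -- inductive step
    push_neg at hzero
    have hS : (Finset.univ.filter (fun s => α s ≠ 0)).Nonempty := by
      obtain ⟨s, hs⟩ := hzero
      exact ⟨s, by simp [hs]⟩
    set m := (Finset.univ.filter (fun s => α s ≠ 0)).min' hS with hm_def
    have hmS : α m ≠ 0 := by
      have := (Finset.univ.filter (fun s => α s ≠ 0)).min'_mem hS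
      simpa using this
    have hmin : ∀ s, s < m → α s = 0 := by
      intro s hs
      by_contra hsne
      exact absurd (Finset.min'_le _ s (by simp [hsne])) (not_le.mpr hs)
    set β : Fin n → ℕ := α - Pi.single m 1 with hβ_def
    have hβα : α = β + Pi.single m 1 := by
      funext s
      by_cases hs : s = m
      · subst hs
        simp only [hβ_def, Pi.add_apply, Pi.sub_apply, Pi.single_eq_same]
        omega
      · simp [hβ_def, Pi.single_apply, hs]
    have h0 : ∀ s, s < m → β s = 0 := by
      intro s hs
      simp [hβ_def, Pi.single_apply, hmin s hs]
    have hsum : (∑ s, β s) < N := by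
      have h1 : (∑ s, α s) = (∑ s, β s) + 1 := by
        conv_lhs => rw [hβα]
        simp only [Pi.add_apply]
        rw [Finset.sum_add_distrib]
        congr 1
        simp [Finset.sum_pi_single']
      omega
    have IHβ : ∀ i' : Fin n, W i' * xpow X β
        = ∑ j, cman p q i' j β • xpow X (eman i' j β) * W j :=
      fun i' => IH (∑ s, β s) hsum β rfl i'
    have hxpow : xpow X α = X m * xpow X β := by
      rw [hβα]; exact xpow_single_mul X β m h0
    rcases lt_trichotomy i m with him | rfl | him
    · -- case `i < m`
      rw [hxpow, ← mul_assoc, hw1 i m him, add_mul, smul_mul_assoc, smul_mul_assoc,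
        mul_assoc, mul_assoc, IHβ i, IHβ m, Finset.mul_sum, Finset.mul_sum,
        Finset.smul_sum, Finset.smul_sum, ← Finset.sum_add_distrib]
      refine Finset.sum_congr rfl (fun j _ => ?_)
      rw [mul_term, mul_term, smul_smul, smul_smul]
      rcases lt_trichotomy j i with hji | rfl | hij
      · rw [cman_zero_of_gt p q i j β hji, cman_zero_of_gt p q m j β (hji.trans him),
          cman_zero_of_gt p q i j α hji]
        simp
      · -- `j = i`
        have hc : cman p q j j α = q * cman p q j j β := by
          rw [hβα]; exact cman_step_diag_lt p q j m β him
        rw [cman_zero_of_gt p q m j β him, mul_zero, zero_smul, add_zero,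
          eman_diag, eman_diag, ← hxpow, hc, smul_mul_assoc]
      · -- `i < j`
        rcases lt_or_ge j m with hjm | hmj
        · -- `i < j < m` : everything vanishes
          rw [cman_zero_of p q i j β hij (h0 j hjm), cman_zero_of_gt p q m j β hjm,
            cman_zero_of p q i j α hij (hmin j hjm)]
          simp
        · -- `m ≤ j`
          have hsc : cman p q i j α = cman p q i j β + (p - 1) * cman p q m j β := by
            rw [hβα]; exact cman_step_lt p q i j m β him hmj h0
          rcases lt_or_eq_of_le hmj with hmj2 | hmj2
          · -- `m < j`
            have hXm : X m * xpow X (eman i j β) = q⁻¹ • xpow X (eman i j α) := by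
              have hδ0 : ∀ s, s < m → (β - Pi.single j 1 : Fin n → ℕ) s = 0 := by
                intro s hs
                simp [Pi.sub_apply, Pi.single_apply, (hs.trans hmj2).ne, h0 s hs]
              rw [eman_off hij.ne, pi_aux1 i j hij.ne β, swap_aux i m him _ hδ0]
              congr 2
              rw [eman_off hij.ne α, hβα, expA i j m hij.ne hmj2.ne β]
            have hXi : X i * xpow X (eman m j β) = xpow X (eman i j α) := by
              have hz : ∀ s, s < i → eman m j β s = 0 := by
                intro s hs
                rw [eman_off hmj2.ne]
                simp [Pi.sub_apply, Pi.single_apply, (hs.trans him).ne,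
                  ((hs.trans him).trans hmj2).ne, h0 s (hs.trans him)]
              rw [← xpow_single_mul X _ i hz]
              congr 1
              rw [eman_off hmj2.ne, eman_off hij.ne α, hβα,
                ← pi_aux1 i j hij.ne (β + Pi.single m 1)]
            rw [hXm, hXi, smul_mul_assoc q⁻¹, smul_smul]
            have hqc : q * cman p q i j β * q⁻¹ = cman p q i j β := by
              rw [mul_comm q _, mul_assoc, mul_inv_cancel₀ hq, mul_one]
            rw [hqc, hsc, add_smul, add_mul, smul_mul_assoc, smul_mul_assoc]
          · -- `j = m`
            subst hmj2
            have hXi : X i * xpow X (eman m m β) = xpow X (eman i m α) := by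
              rw [eman_diag, ← xpow_single_mul X β i (fun s hs => h0 s (hs.trans him))]
              congr 1
              rw [eman_off him.ne α, hβα, expC i m him.ne β]
            by_cases hβm : β m = 0
            · rw [cman_zero_of p q i m β him hβm, mul_zero, zero_smul, zero_add,
                hXi, hsc, cman_zero_of p q i m β him hβm, zero_add, smul_mul_assoc]
            · have hXm : X m * xpow X (eman i m β) = q⁻¹ • xpow X (eman i m α) := by
                have hδ0 : ∀ s, s < m → (β - Pi.single m 1 : Fin n → ℕ) s = 0 := by
                  intro s hs
                  simp [Pi.sub_apply, Pi.single_apply, hs.ne, h0 s hs]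
                rw [eman_off him.ne, pi_aux1 i m him.ne β, swap_aux i m him _ hδ0]
                congr 2
                rw [eman_off him.ne α, hβα, expB i m him.ne β (by omega)]
              rw [hXm, hXi, smul_mul_assoc q⁻¹, smul_smul]
              have hqc : q * cman p q i m β * q⁻¹ = cman p q i m β := by
                rw [mul_comm q _, mul_assoc, mul_inv_cancel₀ hq, mul_one]
              rw [hqc, hsc, add_smul, add_mul, smul_mul_assoc, smul_mul_assoc]
    · -- case `i = m`
      rw [hxpow, ← mul_assoc, hw2 m, smul_mul_assoc, mul_assoc, IHβ m,
        Finset.mul_sum, Finset.smul_sum]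
      refine Finset.sum_congr rfl (fun j _ => ?_)
      rw [mul_term, smul_smul]
      have hsc : cman p q m j α = p * cman p q m j β := by
        rw [hβα]; exact cman_step_self p q j m β
      rcases lt_trichotomy j m with hjm | rfl | hmj
      · rw [cman_zero_of_gt p q m j β hjm, cman_zero_of_gt p q m j α hjm]
        simp
      · rw [eman_diag, eman_diag, ← hxpow, hsc, smul_mul_assoc]
      · have hz : ∀ s, s < m → eman m j β s = 0 := by
          intro s hs
          rw [eman_off hmj.ne]
          simp [Pi.sub_apply, Pi.single_apply, hs.ne, (hs.trans hmj).ne, h0 s hs]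
        have hXm : X m * xpow X (eman m j β) = xpow X (eman m j α) := by
          rw [← xpow_single_mul X _ m hz]
          congr 1
          rw [eman_off hmj.ne, eman_off hmj.ne α, hβα,
            ← pi_aux1 m j hmj.ne (β + Pi.single m 1)]
        rw [hXm, hsc, smul_mul_assoc]
    · -- case `m < i`
      rw [hxpow, ← mul_assoc, hw3 m i him, smul_mul_assoc, mul_assoc, IHβ i,
        Finset.mul_sum, Finset.smul_sum]
      refine Finset.sum_congr rfl (fun j _ => ?_)
      rw [mul_term, smul_smul]
      have hsc : cman p q i j α = (p * q⁻¹) * cman p q i j β := by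
        rw [hβα]; exact cman_step_gt p q i j m β him
      rcases lt_trichotomy j i with hji | rfl | hij
      · rw [cman_zero_of_gt p q i j β hji, cman_zero_of_gt p q i j α hji]
        simp
      · have hz : ∀ s, s < m → eman j j β s = 0 := by
          intro s hs
          rw [eman_diag]
          exact h0 s hs
        have hXm : X m * xpow X (eman j j β) = xpow X (eman j j α) := by
          rw [← xpow_single_mul X _ m hz]
          congr 1
          rw [eman_diag, eman_diag, hβα]
        rw [hXm, hsc, smul_mul_assoc]
      · have hz : ∀ s, s < m → eman i j β s = 0 := by
          intro s hs
          rw [eman_off hij.ne]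
          simp [Pi.sub_apply, Pi.single_apply, (hs.trans him).ne,
            (hs.trans (him.trans hij)).ne, h0 s hs]
        have hXm : X m * xpow X (eman i j β) = xpow X (eman i j α) := by
          rw [← xpow_single_mul X _ m hz]
          congr 1
          rw [eman_off hij.ne, eman_off hij.ne α, hβα,
            expF i j m hij.ne (him.trans hij).ne β]
        rw [hXm, hsc, smul_mul_assoc]
end

section
/- On Manin's quantum n-space, with ∂ᵢ(x^α) = δᵢ(α) x^{α−εⁱ} where δᵢ(α) = πᵢ(α)λᵢ(α)(p^{αᵢ}−1)/(p−1), πᵢ(α) = ∏_{s<i} p^{αₛ}, λᵢ(α) = ∏_{j>i} q^{αⱼ}, one has ∂ᵢ∂ⱼ = pq⁻¹ ∂ⱼ∂ᵢ for all i < j. -/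
/-- `δᵢ(α) = πᵢ(α)λᵢ(α)(p^{αᵢ}-1)/(p-1)`. -/
def deltaManin {K : Type} [Field K] {n : ℕ} (p q : K) (i : Fin n) (α : Fin n → ℕ) : K :=
  piManin p i α * lamManin q i α * ((p ^ α i - 1) / (p - 1))

lemma sub_single_apply_ne {n : ℕ} (α : Fin n → ℕ) {i s : Fin n} (h : s ≠ i) :
    ((α - Pi.single i 1 : Fin n → ℕ)) s = α s := by
  simp [Pi.sub_apply, Pi.single_eq_of_ne h]

lemma piManin_sub_single {K : Type} [Field K] {n : ℕ} (p : K) {i j : Fin n}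
    (hij : i < j) (α : Fin n → ℕ) :
    piManin p i (α - Pi.single j 1) = piManin p i α := by
  unfold piManin
  refine Finset.prod_congr rfl fun s hs => ?_
  have hs' : s < i := by simpa using hs
  rw [sub_single_apply_ne α (by rintro rfl; exact absurd (hs'.trans hij) (lt_irrefl _))]

lemma lamManin_sub_single {K : Type} [Field K] {n : ℕ} (q : K) {i j : Fin n}
    (hij : i < j) (α : Fin n → ℕ) :
    lamManin q j (α - Pi.single i 1) = lamManin q j α := by
  unfold lamManin
  refine Finset.prod_congr rfl fun s hs => ?_
  have hs' : j < s := by simpa using hs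
  rw [sub_single_apply_ne α (by rintro rfl; exact absurd (hij.trans hs') (lt_irrefl _))]

lemma lamManin_sub_single_mul {K : Type} [Field K] {n : ℕ} (q : K) {i j : Fin n}
    (hij : i < j) (α : Fin n → ℕ) (hαj : α j ≠ 0) :
    lamManin q i (α - Pi.single j 1) * q = lamManin q i α := by
  unfold lamManin
  have hjmem : j ∈ Finset.univ.filter (i < ·) := by simp [hij]
  rw [← Finset.mul_prod_erase _ _ hjmem, ← Finset.mul_prod_erase _ _ hjmem]
  have h1 : ∀ s ∈ (Finset.univ.filter (i < ·)).erase j,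
      q ^ ((α - Pi.single j 1 : Fin n → ℕ)) s = q ^ α s := fun s hs => by
    rw [sub_single_apply_ne α (Finset.ne_of_mem_erase hs)]
  rw [Finset.prod_congr rfl h1]
  have : ((α - Pi.single j 1 : Fin n → ℕ)) j = α j - 1 := by simp [Pi.sub_apply]
  rw [this, mul_right_comm, ← pow_succ, Nat.sub_add_cancel (Nat.one_le_iff_ne_zero.mpr hαj)]

lemma piManin_sub_single_mul {K : Type} [Field K] {n : ℕ} (p : K) {i j : Fin n}
    (hij : i < j) (α : Fin n → ℕ) (hαi : α i ≠ 0) :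
    piManin p j (α - Pi.single i 1) * p = piManin p j α := by
  unfold piManin
  have himem : i ∈ Finset.univ.filter (· < j) := by simp [hij]
  rw [← Finset.mul_prod_erase _ _ himem, ← Finset.mul_prod_erase _ _ himem]
  have h1 : ∀ s ∈ (Finset.univ.filter (· < j)).erase i,
      p ^ ((α - Pi.single i 1 : Fin n → ℕ)) s = p ^ α s := fun s hs => by
    rw [sub_single_apply_ne α (Finset.ne_of_mem_erase hs)]
  rw [Finset.prod_congr rfl h1]
  have : ((α - Pi.single i 1 : Fin n → ℕ)) i = α i - 1 := by simp [Pi.sub_apply]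
  rw [this, mul_right_comm, ← pow_succ, Nat.sub_add_cancel (Nat.one_le_iff_ne_zero.mpr hαi)]

lemma delta_key {K : Type} [Field K] {n : ℕ} (p q : K) (hp : p ≠ 0) (hp1 : p ≠ 1) (hq : q ≠ 0)
    {i j : Fin n} (hij : i < j) (α : Fin n → ℕ) :
    deltaManin p q j α * deltaManin p q i (α - Pi.single j 1)
      = p * q⁻¹ * (deltaManin p q i α * deltaManin p q j (α - Pi.single i 1)) := by
  by_cases hαj : α j = 0
  · have h1 : deltaManin p q j α = 0 := by simp [deltaManin, hαj]
    have h2 : deltaManin p q j (α - Pi.single i 1) = 0 := by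
      simp [deltaManin, sub_single_apply_ne α (Fin.ne_of_gt hij), hαj]
    rw [h1, h2]; ring
  by_cases hαi : α i = 0
  · have h1 : deltaManin p q i α = 0 := by simp [deltaManin, hαi]
    have h2 : deltaManin p q i (α - Pi.single j 1) = 0 := by
      simp [deltaManin, sub_single_apply_ne α (Fin.ne_of_lt hij), hαi]
    rw [h1, h2]; ring
  unfold deltaManin
  rw [piManin_sub_single p hij α, lamManin_sub_single q hij α,
    sub_single_apply_ne α (Fin.ne_of_lt hij), sub_single_apply_ne α (Fin.ne_of_gt hij)]
  rw [← lamManin_sub_single_mul q hij α hαj, ← piManin_sub_single_mul p hij α hαi]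
  have hps : p - 1 ≠ 0 := sub_ne_zero.mpr hp1
  field_simp

lemma sub_single_comm {n : ℕ} (α : Fin n → ℕ) (i j : Fin n) :
    α - Pi.single j 1 - Pi.single i 1 = α - Pi.single i 1 - Pi.single j 1 := by
  funext k
  simp [Pi.sub_apply, Nat.sub_sub, Nat.add_comm]


/-- On Manin's quantum `n`-space, the maps
`∂ᵢ(x^α) = δᵢ(α) x^{α-εⁱ}` satisfy `∂ᵢ∂ⱼ = pq⁻¹ ∂ⱼ∂ᵢ` for all `i < j`. -/
theorem maninQuantumSpace_partial_qcomm {K A : Type} [Field K] [Ring A] [Algebra K A]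
    {n : ℕ} (p q : K) (hp : p ≠ 0) (hp1 : p ≠ 1) (hq : q ≠ 0)
    (X : Fin n → A)
    (hrel : ∀ i j : Fin n, i < j → X i * X j = q • (X j * X i))
    (hspan : Submodule.span K (Set.range (xpow X)) = ⊤)
    (par : Fin n → (A →ₗ[K] A))
    (hpar : ∀ i α, par i (xpow X α) =
      deltaManin p q i α • xpow X (α - Pi.single i 1)) :
    ∀ i j : Fin n, i < j →
      (par i).comp (par j) = (p * q⁻¹) • ((par j).comp (par i)) := by
  intro i j hij
  apply LinearMap.ext_on hspan
  rintro _ ⟨α, rfl⟩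
  simp only [LinearMap.comp_apply, LinearMap.smul_apply, hpar, map_smul, smul_smul]
  rw [sub_single_comm α i j, delta_key p q hp hp1 hq hij α]
end

section
/- With the maps ∂ᵢ and σ = (σᵢⱼ) on Manin's quantum n-space as defined (two-parameter p,q calculus), for all k < i < j the identity ∂ᵢ σₖⱼ = pq⁻¹ ∂ⱼ σₖᵢ holds as K-linear maps on A. -/
/-- With the two-parameter `(p,q)` maps `∂ᵢ` and `σ = (σᵢⱼ)` on
Manin's quantum `n`-space, for all `k < i < j` one has
`∂ᵢ σₖⱼ = pq⁻¹ ∂ⱼ σₖᵢ` as `K`-linear maps on `A`. -/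
theorem maninQuantumSpace_partial_sigma_rel {K A : Type}
    [Field K] [Ring A] [Algebra K A]
    {n : ℕ} (p q : K) (hp : p ≠ 0) (hp1 : p ≠ 1) (hq : q ≠ 0)
    (X : Fin n → A)
    (hrel : ∀ i j : Fin n, i < j → X i * X j = q • (X j * X i))
    (hspan : Submodule.span K (Set.range (xpow X)) = ⊤)
    (par : Fin n → (A →ₗ[K] A)) (σ : Fin n → Fin n → (A →ₗ[K] A))
    (hpar : ∀ l α, par l (xpow X α) =
      (piManin p l α * lamManin q l α * ((p ^ α l - 1) / (p - 1))) •
        xpow X (α - Pi.single l 1))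
    (hσ : ∀ i j α, σ i j (xpow X α) = sigmaManin p q X i j α) :
    ∀ k i j : Fin n, k < i → i < j →
      (par i).comp (σ k j) = (p * q⁻¹) • ((par j).comp (σ k i)) := by

  intro k i j hki hij
  have hkj : k < j := hki.trans hij
  apply LinearMap.ext_on_range hspan
  intro α
  simp only [LinearMap.comp_apply, LinearMap.smul_apply, hσ, sigmaManin,
    (ne_of_lt hkj), (ne_of_lt hki), if_false, if_pos hkj, if_pos hki, if_neg]
  set β : Fin n → ℕ := α + Pi.single k 1 - Pi.single j 1 with hβ
  set β' : Fin n → ℕ := α + Pi.single k 1 - Pi.single i 1 with hβ'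
  have hik : i ≠ k := ne_of_gt hki
  have hjk : j ≠ k := ne_of_gt hkj
  have hji : j ≠ i := ne_of_gt hij
  have hβi : β i = α i := by
    simp [hβ, Pi.single_apply, hik, hji.symm]
  have hβ'j : β' j = α j := by
    simp [hβ', Pi.single_apply, hjk, hji]
  rw [map_smul, map_smul, hpar, hpar, hβi, hβ'j]
  by_cases h0 : α i = 0
  · simp [h0]
  by_cases h1 : α j = 0
  · simp [h1]
  -- main case
  have hmono : β - Pi.single i 1 = β' - Pi.single j 1 := by
    funext s
    simp only [hβ, hβ', Pi.sub_apply, Pi.add_apply, Pi.single_apply]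
    rcases eq_or_ne s i with rfl | hsi
    · simp [hji.symm, hik, Nat.pos_of_ne_zero h0]
    rcases eq_or_ne s j with rfl | hsj
    · simp [hji, hjk, Nat.pos_of_ne_zero h1]
    · simp [hsi, hsj]
  have hπi : piManin p i β = p * piManin p i α := by
    have hA : ∀ s ∈ Finset.univ.filter (· < i),
        p ^ β s = (if s = k then p else 1) * p ^ α s := by
      intro s hs
      simp only [Finset.mem_filter] at hs
      have hsj : s ≠ j := ne_of_lt (hs.2.trans hij)
      simp only [hβ, Pi.sub_apply, Pi.add_apply, Pi.single_apply, hsj, if_false,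
        Nat.sub_zero]
      rcases eq_or_ne s k with rfl | hsk
      · simp [pow_succ, mul_comm]
      · simp [hsk]
    calc piManin p i β
        = ∏ s ∈ Finset.univ.filter (· < i), ((if s = k then p else 1) * p ^ α s) :=
          Finset.prod_congr rfl hA
      _ = (∏ s ∈ Finset.univ.filter (· < i), (if s = k then p else 1)) *
            ∏ s ∈ Finset.univ.filter (· < i), p ^ α s := Finset.prod_mul_distrib
      _ = p * piManin p i α := by
          rw [Finset.prod_ite_eq' (Finset.univ.filter (· < i)) k (fun _ => p)]
          simp [hki, piManin]
  have hlami : lamManin q i β = q⁻¹ * lamManin q i α := by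
    have hA : ∀ s ∈ Finset.univ.filter (i < ·),
        q ^ β s = (if s = j then q⁻¹ else 1) * q ^ α s := by
      intro s hs
      simp only [Finset.mem_filter] at hs
      have hsk : s ≠ k := ne_of_gt (hki.trans hs.2)
      simp only [hβ, Pi.sub_apply, Pi.add_apply, Pi.single_apply, hsk, if_false,
        Nat.add_zero]
      rcases eq_or_ne s j with rfl | hsj
      · rw [if_pos rfl, if_pos rfl]
        have hαj := Nat.pos_of_ne_zero h1
        field_simp
        rw [← pow_succ]
        congr 1
        omega
      · simp [hsj]
    calc lamManin q i β
        = ∏ s ∈ Finset.univ.filter (i < ·), ((if s = j then q⁻¹ else 1) * q ^ α s) :=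
          Finset.prod_congr rfl hA
      _ = (∏ s ∈ Finset.univ.filter (i < ·), (if s = j then q⁻¹ else 1)) *
            ∏ s ∈ Finset.univ.filter (i < ·), q ^ α s := Finset.prod_mul_distrib
      _ = q⁻¹ * lamManin q i α := by
          rw [Finset.prod_ite_eq' (Finset.univ.filter (i < ·)) j (fun _ => q⁻¹)]
          simp [hij, lamManin]
  have hπj : piManin p j β' = piManin p j α := by
    have hA : ∀ s ∈ Finset.univ.filter (· < j),
        p ^ β' s = (if s = k then p else 1) * ((if s = i then p⁻¹ else 1) * p ^ α s) := by
      intro s hs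
      simp only [Finset.mem_filter] at hs
      simp only [hβ', Pi.sub_apply, Pi.add_apply, Pi.single_apply]
      rcases eq_or_ne s k with rfl | hsk
      · simp [hik.symm, pow_succ, mul_comm]
      rcases eq_or_ne s i with rfl | hsi
      · rw [if_neg hsk, if_neg hsk, if_pos rfl, if_pos rfl, one_mul]
        have hαi := Nat.pos_of_ne_zero h0
        field_simp
        rw [← pow_succ]
        congr 1
        omega
      · simp [hsk, hsi]
    calc piManin p j β'
        = ∏ s ∈ Finset.univ.filter (· < j),
            ((if s = k then p else 1) * ((if s = i then p⁻¹ else 1) * p ^ α s)) :=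
          Finset.prod_congr rfl hA
      _ = (∏ s ∈ Finset.univ.filter (· < j), (if s = k then p else 1)) *
            ((∏ s ∈ Finset.univ.filter (· < j), (if s = i then p⁻¹ else 1)) *
              ∏ s ∈ Finset.univ.filter (· < j), p ^ α s) := by
          rw [Finset.prod_mul_distrib, Finset.prod_mul_distrib]
      _ = piManin p j α := by
          rw [Finset.prod_ite_eq' (Finset.univ.filter (· < j)) k (fun _ => p),
            Finset.prod_ite_eq' (Finset.univ.filter (· < j)) i (fun _ => p⁻¹)]
          simp only [Finset.mem_filter, Finset.mem_univ, true_and, hkj, hij, if_pos]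
          rw [← mul_assoc, mul_inv_cancel₀ hp, one_mul]
          rfl
  have hlamj : lamManin q j β' = lamManin q j α := by
    refine Finset.prod_congr rfl (fun s hs => ?_)
    simp only [Finset.mem_filter] at hs
    have hsk : s ≠ k := ne_of_gt (hkj.trans hs.2)
    have hsi : s ≠ i := ne_of_gt (hij.trans hs.2)
    simp [hβ', Pi.single_apply, hsk, hsi]
  rw [hmono, hπi, hlami, hπj, hlamj, smul_smul, smul_smul, smul_smul]
  congr 1
  ring
end

section
/- With the two-parameter differential structure on Manin's quantum n-space, for all i < j the identity ∂ᵢσᵢⱼ − pq⁻¹∂ⱼσᵢᵢ = pq⁻¹σᵢⱼ∂ᵢ − σᵢᵢ∂ⱼ holds; in fact both sides applied to x^α equal −(q⁻¹/(p−1)) ηᵢⱼ(α) πᵢ(α) λᵢ(α) x^{α−εʲ}. -/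
/-- `ηᵢⱼ(α) = πⱼ(α)λ̄ᵢ(α)λⱼ(α)(p^{αⱼ}-1)` for `i < j` (the off-diagonal scalar
of `σᵢⱼ`). -/
def etaManin {K : Type} [Field K] {n : ℕ} (p q : K) (i j : Fin n)
    (α : Fin n → ℕ) : K :=
  piManin p j α * lambarManin q i α * lamManin q j α * (p ^ α j - 1)

section helpers
variable {K : Type} [Field K] {n : ℕ}

lemma prod_pow_single_add (c : K) (α : Fin n → ℕ) (i : Fin n) (S : Finset (Fin n)) :
    ∏ s ∈ S, c ^ ((α + Pi.single i 1 : Fin n → ℕ) s) = (∏ s ∈ S, c ^ α s) * (if i ∈ S then c else 1) := by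
  have h : ∀ s ∈ S, c ^ ((α + Pi.single i 1 : Fin n → ℕ) s) = c ^ α s * (if s = i then c else 1) := by
    intro s _
    by_cases hs : s = i
    · subst hs; simp [pow_succ]
    · simp [Pi.single_eq_of_ne hs, hs]
  rw [Finset.prod_congr rfl h, Finset.prod_mul_distrib, Finset.prod_ite_eq' S i fun _ => c]

lemma piManin_add (p : K) (l i : Fin n) (α : Fin n → ℕ) :
    piManin p l (α + Pi.single i 1) = piManin p l α * (if i < l then p else 1) := by
  rw [piManin, piManin, prod_pow_single_add]
  simp

lemma lamManin_add (q : K) (l i : Fin n) (α : Fin n → ℕ) :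
    lamManin q l (α + Pi.single i 1) = lamManin q l α * (if l < i then q else 1) := by
  rw [lamManin, lamManin, prod_pow_single_add]
  simp

lemma lambarManin_add (q : K) (l i : Fin n) (α : Fin n → ℕ) :
    lambarManin q l (α + Pi.single i 1) = lambarManin q l α * (if i < l then q⁻¹ else 1) := by
  rw [lambarManin, lambarManin, prod_pow_single_add]
  simp

lemma pi_decomp (α : Fin n → ℕ) (i : Fin n) (h : α i ≠ 0) :
    α = (α - Pi.single i 1) + Pi.single i 1 := by
  funext s
  by_cases hs : s = i
  · subst hs; simp only [Pi.add_apply, Pi.sub_apply, Pi.single_eq_same]; omega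
  · simp [Pi.single_eq_of_ne hs]

lemma pi_add_sub_cancel (β g : Fin n → ℕ) : β + g - g = β := by
  funext s; simp

lemma pi_sub_self_of_zero (α : Fin n → ℕ) (i : Fin n) (h : α i = 0) :
    α - Pi.single i 1 = α := by
  funext s
  by_cases hs : s = i
  · subst hs; simp [h]
  · simp [Pi.single_eq_of_ne hs]

end helpers

/-- With the two-parameter differential structure on Manin's
quantum `n`-space, for all `i < j` the identity
`∂ᵢσᵢⱼ - pq⁻¹∂ⱼσᵢᵢ = pq⁻¹σᵢⱼ∂ᵢ - σᵢᵢ∂ⱼ` holds; in fact both sides applied to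
`x^α` equal `-(q⁻¹/(p-1)) ηᵢⱼ(α) πᵢ(α) λᵢ(α) x^{α-εʲ}`. -/
theorem maninQuantumSpace_mixed_rel {K A : Type}
    [Field K] [Ring A] [Algebra K A]
    {n : ℕ} (p q : K) (hp : p ≠ 0) (hp1 : p ≠ 1) (hq : q ≠ 0)
    (X : Fin n → A)
    (hrel : ∀ i j : Fin n, i < j → X i * X j = q • (X j * X i))
    (hspan : Submodule.span K (Set.range (xpow X)) = ⊤)
    (par : Fin n → (A →ₗ[K] A)) (σ : Fin n → Fin n → (A →ₗ[K] A))
    (hpar : ∀ l α, par l (xpow X α) =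
      (piManin p l α * lamManin q l α * ((p ^ α l - 1) / (p - 1))) •
        xpow X (α - Pi.single l 1))
    (hσ : ∀ i j α, σ i j (xpow X α) = sigmaManin p q X i j α) :
    ∀ i j : Fin n, i < j →
      ((par i).comp (σ i j) - (p * q⁻¹) • ((par j).comp (σ i i)) =
        (p * q⁻¹) • ((σ i j).comp (par i)) - (σ i i).comp (par j)) ∧
      ∀ α : Fin n → ℕ,
        par i (σ i j (xpow X α)) - (p * q⁻¹) • par j (σ i i (xpow X α)) =
          (-(q⁻¹ / (p - 1)) * etaManin p q i j α * piManin p i α * lamManin q i α) •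
            xpow X (α - Pi.single j 1) ∧
        (p * q⁻¹) • σ i j (par i (xpow X α)) - σ i i (par j (xpow X α)) =
          (-(q⁻¹ / (p - 1)) * etaManin p q i j α * piManin p i α * lamManin q i α) •
            xpow X (α - Pi.single j 1) := by
  intro i j hij
  have hij' : i ≠ j := hij.ne
  have hji : ¬ j < i := lt_asymm hij
  have hii : ¬ i < i := lt_irrefl i
  have hjj : ¬ j < j := lt_irrefl j
  have hsji : (Pi.single j 1 : Fin n → ℕ) i = 0 := Pi.single_eq_of_ne hij' 1
  have hsij : (Pi.single i 1 : Fin n → ℕ) j = 0 := Pi.single_eq_of_ne (Ne.symm hij') 1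
  have hmono1 : ∀ α : Fin n → ℕ,
      α + Pi.single i 1 - Pi.single j 1 - Pi.single i 1 = α - Pi.single j 1 := by
    intro α; funext s
    simp only [Pi.sub_apply, Pi.add_apply]
    rcases eq_or_ne s i with rfl | hsi
    · simp only [Pi.single_eq_same, hsji]; omega
    · rcases eq_or_ne s j with rfl | hsj
      · simp only [Pi.single_eq_same, hsij, Pi.single_eq_of_ne hsi]; omega
      · simp only [Pi.single_eq_of_ne hsi, Pi.single_eq_of_ne hsj]; omega
  have key1 : ∀ α : Fin n → ℕ,
      par i (σ i j (xpow X α)) - (p * q⁻¹) • par j (σ i i (xpow X α)) =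
        (-(q⁻¹ / (p - 1)) * etaManin p q i j α * piManin p i α * lamManin q i α) •
          xpow X (α - Pi.single j 1) := by
    intro α
    rw [hσ i j α, hσ i i α]
    unfold sigmaManin
    rw [if_neg hij', if_pos hij, if_pos rfl]
    rw [map_smul, map_smul, hpar i _, hpar j α, hmono1 α]
    rw [smul_smul, smul_smul, smul_smul, ← sub_smul]
    congr 1
    by_cases hj : α j = 0
    · simp [etaManin, hj]
    · obtain ⟨δ, rfl⟩ : ∃ δ : Fin n → ℕ, α = δ + Pi.single j 1 := ⟨_, pi_decomp α j hj⟩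
      have e1 : δ + Pi.single j 1 + Pi.single i 1 - Pi.single j 1 = δ + Pi.single i 1 := by
        rw [add_right_comm, pi_add_sub_cancel]
      rw [e1]
      simp only [etaManin, piManin_add, lamManin_add, lambarManin_add,
        if_pos hij, if_neg hji, if_neg hii, if_neg hjj,
        Pi.add_apply, Pi.single_eq_same, hsji, hsij]
      have hpne : p - 1 ≠ 0 := sub_ne_zero.mpr hp1
      field_simp
      ring
  have key2 : ∀ α : Fin n → ℕ,
      (p * q⁻¹) • σ i j (par i (xpow X α)) - σ i i (par j (xpow X α)) =
        (-(q⁻¹ / (p - 1)) * etaManin p q i j α * piManin p i α * lamManin q i α) •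
          xpow X (α - Pi.single j 1) := by
    intro α
    rw [hpar i α, hpar j α, map_smul, map_smul, hσ i j _, hσ i i _]
    unfold sigmaManin
    rw [if_neg hij', if_pos hij, if_pos rfl]
    have hpne : p - 1 ≠ 0 := sub_ne_zero.mpr hp1
    by_cases hi : α i = 0
    · rw [pi_sub_self_of_zero α i hi]
      rw [hi]
      simp only [pow_zero, sub_self, zero_div, mul_zero, zero_smul, smul_zero, zero_sub]
      by_cases hj : α j = 0
      · simp [etaManin, hj]
      · obtain ⟨δ, rfl⟩ : ∃ δ : Fin n → ℕ, α = δ + Pi.single j 1 := ⟨_, pi_decomp α j hj⟩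
        have hδi : δ i = 0 := by simpa [hsji] using hi
        rw [pi_add_sub_cancel]
        rw [smul_smul, ← neg_smul]
        congr 1
        simp only [etaManin, piManin_add, lamManin_add, lambarManin_add,
          if_pos hij, if_neg hji, if_neg hii, if_neg hjj,
          Pi.add_apply, Pi.single_eq_same, hsji, hsij, hδi]
        field_simp
    · by_cases hj : α j = 0
      · have hsubj : (α - Pi.single i 1 : Fin n → ℕ) j = 0 := by
          simp [hsij, hj]
        rw [hj, hsubj]
        simp only [pow_zero, sub_self, zero_div, mul_zero, zero_smul, smul_zero,
          zero_sub, mul_zero, zero_smul]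
        simp [etaManin, hj]
      · obtain ⟨δ, rfl⟩ : ∃ δ : Fin n → ℕ, α = δ + Pi.single j 1 := ⟨_, pi_decomp α j hj⟩
        have hδi : δ i ≠ 0 := by simpa [hsji] using hi
        obtain ⟨γ, rfl⟩ : ∃ γ : Fin n → ℕ, δ = γ + Pi.single i 1 := ⟨_, pi_decomp δ i hδi⟩
        have eB : γ + Pi.single i 1 + Pi.single j 1 - Pi.single j 1 = γ + Pi.single i 1 :=
          pi_add_sub_cancel _ _
        have eA : γ + Pi.single i 1 + Pi.single j 1 - Pi.single i 1 = γ + Pi.single j 1 := by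
          rw [add_right_comm, pi_add_sub_cancel]
        have eC : γ + Pi.single j 1 + Pi.single i 1 - Pi.single j 1 = γ + Pi.single i 1 := by
          rw [add_right_comm, pi_add_sub_cancel]
        rw [eA, eB, eC]
        rw [smul_smul, smul_smul, smul_smul, ← sub_smul]
        congr 1
        simp only [etaManin, piManin_add, lamManin_add, lambarManin_add,
          if_pos hij, if_neg hji, if_neg hii, if_neg hjj,
          Pi.add_apply, Pi.single_eq_same, hsji, hsij]
        field_simp
        ring
  refine ⟨?_, fun α => ⟨key1 α, key2 α⟩⟩
  apply LinearMap.ext_on hspan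
  rintro _ ⟨α, rfl⟩
  simp only [LinearMap.sub_apply, LinearMap.comp_apply, LinearMap.smul_apply]
  rw [key1 α, key2 α]
end
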